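/- arXiv:2109.00717 — 6 statements merged into one kernel-verified Lean document; each statement's English description precedes it below -/
import Mathlib

section
/- Let n ≥ 3, α = e^{2πi/2^n}, s_j = α^j + α^{-j}, and r_j = s_j + s_{2^{n-2}-j}. Then for all integers j and k, the product r_j · r_k lies in 2·ℤ[α + α^{-1}], i.e. r_j · r_k ≡ 0 (mod 2) in the ring of integers ℤ[α+α^{-1}] of the maximal real subfield. -/
lemma cheb_mem (α : ℂ) (h : α ≠ 0) :
    ∀ m : ℕ, α ^ (m : ℤ) + α ^ (-(m : ℤ)) ∈ Algebra.adjoin ℤ ({α + α⁻¹} : Set ℂ) := by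
  intro m
  induction m using Nat.strong_induction_on with
  | _ m ih =>
    match m with
    | 0 => simpa using add_mem (one_mem _) (one_mem _)
    | 1 =>
      have : α ^ ((1:ℕ) : ℤ) + α ^ (-((1:ℕ) : ℤ)) = α + α⁻¹ := by
        simp [zpow_neg]
      rw [this]
      exact Algebra.subset_adjoin rfl
    | (t+2) =>
      have h1 := ih (t+1) (by omega)
      have h0 := ih t (by omega)
      have key : α ^ ((t+2:ℕ) : ℤ) + α ^ (-((t+2:ℕ) : ℤ)) =
          (α + α⁻¹) * (α ^ ((t+1:ℕ) : ℤ) + α ^ (-((t+1:ℕ) : ℤ)))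
            - (α ^ ((t:ℕ) : ℤ) + α ^ (-((t:ℕ) : ℤ))) := by
        simp only [zpow_neg, zpow_natCast]
        field_simp
        ring
      rw [key]
      exact sub_mem (mul_mem (Algebra.subset_adjoin rfl) h1) h0

lemma cheb_mem' (α : ℂ) (h : α ≠ 0) (m : ℤ) :
    α ^ m + α ^ (-m) ∈ Algebra.adjoin ℤ ({α + α⁻¹} : Set ℂ) := by
  obtain ⟨t, rfl | rfl⟩ := Int.eq_nat_or_neg m
  · exact cheb_mem α h t
  · rw [neg_neg, add_comm (α ^ (-(t:ℤ))) (α ^ (t:ℤ))]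
    exact cheb_mem α h t

theorem stmt_9 (n : ℕ) (hn : 3 ≤ n)
    (α : ℂ) (hα : α = Complex.exp (2 * Real.pi * Complex.I / 2 ^ n))
    (s : ℤ → ℂ) (hs : ∀ j : ℤ, s j = α ^ j + α ^ (-j))
    (r : ℤ → ℂ) (hr : ∀ j : ℤ, r j = s j + s (2 ^ (n - 2) - j)) :
    ∀ j k : ℤ, ∃ x ∈ Algebra.adjoin ℤ ({α + α⁻¹} : Set ℂ),
      r j * r k = 2 * x := by
  have hα0 : α ≠ 0 := by rw [hα]; exact Complex.exp_ne_zero _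
  -- α ^ 2^(n-2) = I
  have hN : α ^ ((2:ℤ) ^ (n - 2)) = Complex.I := by
    have hcast : ((2:ℤ) ^ (n-2)) = ((2 ^ (n-2) : ℕ) : ℤ) := by push_cast; ring
    rw [hcast, zpow_natCast, hα, ← Complex.exp_nat_mul]
    have harg : (2 ^ (n-2) : ℕ) * (2 * (Real.pi : ℂ) * Complex.I / 2 ^ n) =
        (Real.pi / 2 : ℝ) * Complex.I := by
      have hn2 : n - 2 + 2 = n := Nat.sub_add_cancel (by omega)
      have h2n : (2:ℂ) ^ n = 2 ^ (n-2) * 4 := by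
        rw [show (4:ℂ) = 2 ^ 2 by norm_num, ← pow_add, hn2]
      have h2 : ((2:ℂ)) ^ (n-2) ≠ 0 := pow_ne_zero _ two_ne_zero
      push_cast
      rw [h2n]
      field_simp
      ring
    rw [harg, Complex.exp_mul_I]
    push_cast
    rw [Complex.cos_pi_div_two, Complex.sin_pi_div_two]
    ring
  have key : ∀ m : ℤ, α ^ ((2:ℤ) ^ (n-2) - m) + α ^ (-((2:ℤ) ^ (n-2) - m)) =
      Complex.I * (α ^ m)⁻¹ - Complex.I * α ^ m := by
    intro m
    rw [neg_sub, zpow_sub₀ hα0, zpow_sub₀ hα0, hN, div_eq_mul_inv, div_eq_mul_inv,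
      Complex.inv_I]
    ring
  intro j k
  refine ⟨s (2 ^ (n-2) - (j + k)) + s (j - k), add_mem ?_ ?_, ?_⟩
  · rw [hs]; exact cheb_mem' α hα0 _
  · rw [hs]; exact cheb_mem' α hα0 _
  · rw [hr, hr, hs, hs, hs, hs, hs, hs, key, key, key]
    simp only [zpow_add₀ hα0, neg_sub, zpow_sub₀ hα0, zpow_neg, neg_add,
      div_eq_mul_inv, mul_inv]
    set a := α ^ j with hadef
    set b := α ^ k with hbdef
    have ha : a ≠ 0 := zpow_ne_zero _ hα0
    have hb : b ≠ 0 := zpow_ne_zero _ hα0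
    field_simp
    linear_combination (1 - a^2 - b^2 + a^2 * b^2) * Complex.I_sq
end

section
/- Let n ≥ 3, α = e^{2πi/2^n}, and s_j = α^j + α^{-j}. The family (1, s_1, s_2, …, s_{2^{n-2}-1}) is an integral basis of the maximal real subfield ℚ(α) ∩ ℝ, i.e. a ℤ-basis of its ring of integers ℤ[α + α^{-1}]. -/
set_option maxHeartbeats 1000000
set_option synthInstance.maxHeartbeats 200000

open Polynomial IntermediateField

theorem dickson_aux (R : Type*) [CommRing R] [Nontrivial R] :
    ∀ k : ℕ, ((dickson 1 (1:R) (k+1)).Monic ∧ (dickson 1 (1:R) (k+1)).natDegree = k + 1) := by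
  intro k
  induction k using Nat.strong_induction_on with
  | _ k ih =>
    match k with
    | 0 => simp [dickson_one, monic_X]
    | (k+1) =>
      have h1 := ih k (by omega)
      have h0 : (dickson 1 (1:R) k).degree ≤ (k : ℕ) := by
        match k with
        | 0 =>
          rw [dickson_zero]
          refine degree_le_of_natDegree_le (le_trans (natDegree_sub_le _ _) ?_)
          simp [natDegree_ofNat]
        | (j+1) =>
          exact degree_le_of_natDegree_le (le_of_eq (ih j (by omega)).2)
      rw [dickson_add_two, C_1, one_mul]
      have hm : (X * dickson 1 (1:R) (k+1)).Monic := (monic_X).mul h1.1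
      have hdeg : (X * dickson 1 (1:R) (k+1)).natDegree = k + 2 := by
        rw [Monic.natDegree_mul monic_X h1.1, natDegree_X, h1.2]; omega
      have hlt : (dickson 1 (1:R) k).degree < (X * dickson 1 (1:R) (k+1)).degree := by
        rw [degree_eq_natDegree hm.ne_zero, hdeg]
        exact lt_of_le_of_lt h0 (by exact_mod_cast by omega)
      exact ⟨hm.sub_of_left hlt, by
        rw [natDegree_sub_eq_left_of_natDegree_lt, hdeg]
        have := natDegree_le_iff_degree_le.2 h0
        omega⟩

theorem deg_aux (n : ℕ) (hn : 3 ≤ n)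
    (α : ℂ) (hα : α = Complex.exp (2 * Real.pi * Complex.I / 2 ^ n)) :
    (minpoly ℤ (α + α⁻¹)).natDegree = 2 ^ (n - 2) := by
  set θ := α + α⁻¹ with hθ
  have hprim : IsPrimitiveRoot α (2^n) := by
    have := Complex.isPrimitiveRoot_exp (2^n) (by positivity)
    simp only [Nat.cast_pow, Nat.cast_ofNat] at this
    rwa [← hα] at this
  have hα0 : α ≠ 0 := by
    rw [hα]; exact Complex.exp_ne_zero _
  have hintα : IsIntegral ℤ α := hprim.isIntegral (by positivity)
  have hintαinv : IsIntegral ℤ α⁻¹ := (hprim.inv).isIntegral (by positivity)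
  have hθint : IsIntegral ℤ θ := hintα.add hintαinv
  have hθintQ : IsIntegral ℚ θ := hθint.tower_top
  have hαintQ : IsIntegral ℚ α := hintα.tower_top
  -- α ^ 2^(n-1) = -1
  have hpow : α ^ (2^(n-1)) = -1 := by
    rw [hα, ← Complex.exp_nat_mul]
    have h1 : ((2^(n-1) : ℕ) : ℂ) * (2 * Real.pi * Complex.I / 2 ^ n) = Real.pi * Complex.I := by
      have h2 : (2:ℂ)^n = 2^(n-1) * 2 := by
        rw [← pow_succ]; congr 1; omega
      rw [h2]
      have h3 : ((2:ℂ)^(n-1)) ≠ 0 := pow_ne_zero _ two_ne_zero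
      push_cast
      field_simp
    rw [h1, Complex.exp_pi_mul_I]
  have hm2 : 2 ^ (n-1) = 2 * 2 ^ (n-2) := by
    rw [← pow_succ']; congr 1; omega
  -- dickson root
  have hroot : aeval θ (dickson 1 (1:ℚ) (2^(n-2))) = 0 := by
    rw [aeval_def, eval₂_eq_eval_map, map_dickson, map_one,
      hθ, dickson_one_one_eval_add_inv α α⁻¹ (mul_inv_cancel₀ hα0)]
    rw [inv_pow]
    have key : α ^ 2^(n-2) * α ^ 2^(n-2) = -1 := by
      rw [← pow_add, ← two_mul, ← hm2, hpow]
    have h0 : α ^ 2 ^ (n - 2) ≠ 0 := pow_ne_zero _ hα0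
    field_simp
    linear_combination key
  have hQdeg_le : (minpoly ℚ θ).natDegree ≤ 2^(n-2) := by
    have h1 : 1 ≤ 2^(n-2) := Nat.one_le_two_pow
    have := minpoly.min ℚ θ (dickson_aux ℚ (2^(n-2) - 1)).1 (by
      rw [Nat.sub_add_cancel h1]; exact hroot)
    have h2 := natDegree_le_natDegree this
    rwa [(dickson_aux ℚ (2^(n-2) - 1)).2, Nat.sub_add_cancel h1] at h2
  -- lower bound
  set A : IntermediateField ℚ ℂ := ℚ⟮θ⟯ with hA
  have hfrA : Module.finrank ℚ A = (minpoly ℚ θ).natDegree := adjoin.finrank hθintQ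
  haveI : FiniteDimensional ℚ A := adjoin.finiteDimensional hθintQ
  have hθA : algebraMap A ℂ (AdjoinSimple.gen ℚ θ) = θ := rfl
  have hintαA : IsIntegral A α := hαintQ.tower_top
  -- minpoly A α has degree ≤ 2
  have hg : Polynomial.aeval α (X^2 - C (AdjoinSimple.gen ℚ θ) * X + 1 : A[X]) = 0 := by
    simp only [map_add, map_sub, map_mul, map_pow, aeval_X, aeval_C, map_one, hθA]
    rw [hθ]
    field_simp
    ring
  have hgmonic : (X^2 - C (AdjoinSimple.gen ℚ θ) * X + 1 : A[X]).Monic := by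
    have : (X^2 - C (AdjoinSimple.gen ℚ θ) * X + 1 : A[X])
        = X^2 + (1 - C (AdjoinSimple.gen ℚ θ) * X) := by ring
    rw [this]
    refine monic_X_pow_add ?_
    refine lt_of_le_of_lt (degree_sub_le _ _) ?_
    simp only [degree_one]
    refine max_lt (by norm_num) (lt_of_le_of_lt (degree_mul_le _ _) ?_)
    refine lt_of_le_of_lt (add_le_add degree_C_le degree_X_le) (by norm_num)
  have hfin2 : Module.finrank A A⟮α⟯ ≤ 2 := by
    rw [adjoin.finrank hintαA]
    have := natDegree_le_natDegree (minpoly.min A α hgmonic hg)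
    refine le_trans this ?_
    refine le_trans (natDegree_add_le _ _) ?_
    simp only [natDegree_one, max_le_iff]
    constructor
    · refine le_trans (natDegree_sub_le _ _) ?_
      simp only [natDegree_X_pow, max_le_iff]
      exact ⟨le_refl 2, le_trans (natDegree_mul_le) (by simp)⟩
    · omega
  -- tower
  haveI : FiniteDimensional A A⟮α⟯ := adjoin.finiteDimensional hintαA
  set B : IntermediateField ℚ ℂ := IntermediateField.adjoin ℚ {θ, α} with hB
  have hres : restrictScalars ℚ A⟮α⟯ = B := by
    rw [hA]
    refine (adjoin_adjoin_left (F := ℚ) (S := {θ}) {α}).trans ?_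
    congr 1
  have hAB : A ≤ B := by
    rw [← hres]
    intro x hx
    exact A⟮α⟯.algebraMap_mem ⟨x, hx⟩
  have hext : extendScalars hAB = A⟮α⟯ := by
    apply restrictScalars_injective ℚ
    rw [hres]
    exact extendScalars_restrictScalars hAB
  haveI : FiniteDimensional ℚ B := finiteDimensional_adjoin (by
    rintro x hx
    rcases hx with rfl | hx
    · exact hθintQ
    · rcases hx with rfl
      exact hαintQ)
  have htower := finrank_bot_mul_relfinrank hAB
  have hrel : relfinrank A B ≤ 2 := by
    rw [relfinrank_eq_finrank_of_le hAB, hext]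
    exact hfin2
  have hQα : Module.finrank ℚ (ℚ⟮α⟯ : IntermediateField ℚ ℂ) = 2^(n-1) := by
    rw [adjoin.finrank hαintQ, ← Polynomial.cyclotomic_eq_minpoly_rat hprim (by positivity),
      natDegree_cyclotomic, Nat.totient_prime_pow Nat.prime_two (by omega)]
    simp
  have hle : (ℚ⟮α⟯ : IntermediateField ℚ ℂ) ≤ B := by
    rw [adjoin_le_iff]
    intro x hx
    rcases hx with rfl
    exact subset_adjoin ℚ _ (by simp)
  have hmono : Module.finrank ℚ (ℚ⟮α⟯ : IntermediateField ℚ ℂ) ≤ Module.finrank ℚ B := by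
    haveI : Module.Finite ℚ B.toSubmodule := inferInstanceAs (FiniteDimensional ℚ B)
    exact Submodule.finrank_mono (show ℚ⟮α⟯.toSubmodule ≤ B.toSubmodule from hle)
  -- combine
  have hZQ : (minpoly ℚ θ).natDegree = (minpoly ℤ θ).natDegree := by
    have h := minpoly.isIntegrallyClosed_eq_field_fractions ℚ ℂ (S := ℂ) hθint
    rw [Algebra.algebraMap_self, RingHom.id_apply] at h
    rw [h]
    exact (minpoly.monic hθint).natDegree_map _
  have h2m : 2^(n-1) = 2 * 2^(n-2) := hm2
  rw [hQα] at hmono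
  rw [← htower, hfrA] at hmono
  have : 2 * 2^(n-2) ≤ (minpoly ℚ θ).natDegree * 2 :=
    le_trans (h2m ▸ hmono) (Nat.mul_le_mul_left _ hrel)
  omega


theorem stmt_11 (n : ℕ) (hn : 3 ≤ n)
    (α : ℂ) (hα : α = Complex.exp (2 * Real.pi * Complex.I / 2 ^ n))
    (s : ℤ → ℂ) (hs : ∀ j : ℤ, s j = α ^ j + α ^ (-j)) :
    ∃ b : Module.Basis (Fin (2 ^ (n - 2))) ℤ (Algebra.adjoin ℤ ({α + α⁻¹} : Set ℂ)),
      ∀ i : Fin (2 ^ (n - 2)),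
        (b i : ℂ) = if (i : ℕ) = 0 then 1 else s ((i : ℕ) : ℤ) := by
  have hdim := deg_aux n hn α hα
  set θ := α + α⁻¹ with hθ
  have hprim : IsPrimitiveRoot α (2^n) := by
    have := Complex.isPrimitiveRoot_exp (2^n) (by positivity)
    simp only [Nat.cast_pow, Nat.cast_ofNat] at this
    rwa [← hα] at this
  have hα0 : α ≠ 0 := by
    rw [hα]; exact Complex.exp_ne_zero _
  have hintα : IsIntegral ℤ α := hprim.isIntegral (by positivity)
  have hintαinv : IsIntegral ℤ α⁻¹ := (hprim.inv).isIntegral (by positivity)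
  have hθint : IsIntegral ℤ θ := hintα.add hintαinv
  have hm1 : 1 ≤ 2^(n-2) := Nat.one_le_two_pow
  set M := Algebra.adjoin ℤ ({θ} : Set ℂ) with hM
  set pb := Algebra.adjoin.powerBasis' (S := ℂ) hθint with hpb
  have hpbdim : pb.dim = 2^(n-2) := by
    rw [hpb, Algebra.adjoin.powerBasis'_dim, hdim]
  set b0 : Module.Basis (Fin (2^(n-2))) ℤ M := pb.basis.reindex (finCongr hpbdim) with hb0def
  have hb0 : ∀ i : Fin (2^(n-2)), b0 i = pb.gen ^ (i : ℕ) := by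
    intro i
    rw [hb0def, Module.Basis.reindex_apply, PowerBasis.coe_basis]
    congr 1
  set Q : ℕ → Polynomial ℤ := fun i => if i = 0 then 1 else dickson 1 1 i with hQ
  have hQmonic : ∀ i, (Q i).Monic := by
    intro i
    rcases Nat.eq_zero_or_pos i with h | h
    · simp [hQ, h, monic_one]
    · obtain ⟨j, rfl⟩ : ∃ j, i = j + 1 := ⟨i-1, by omega⟩
      simpa [hQ] using (dickson_aux ℤ j).1
  have hQdeg : ∀ i, (Q i).natDegree = i := by
    intro i
    rcases Nat.eq_zero_or_pos i with h | h
    · simp [hQ, h]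
    · obtain ⟨j, rfl⟩ : ∃ j, i = j + 1 := ⟨i-1, by omega⟩
      simpa [hQ] using (dickson_aux ℤ j).2
  set Amat : Matrix (Fin (2^(n-2))) (Fin (2^(n-2))) ℤ :=
    Matrix.of (fun i j => (Q j).coeff i) with hAmat
  have htri : Amat.BlockTriangular id := by
    intro i j hlt
    simp only [hAmat, Matrix.of_apply]
    exact coeff_eq_zero_of_natDegree_lt (by rw [hQdeg]; exact hlt)
  have hdiag : ∀ i, Amat i i = 1 := by
    intro i
    simp only [hAmat, Matrix.of_apply]
    have := (hQmonic i).coeff_natDegree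
    rwa [hQdeg] at this
  have hdet : Amat.det = 1 := by
    rw [Matrix.det_of_upperTriangular htri]
    simp [hdiag]
  set f := Matrix.toLin b0 b0 Amat with hf
  have hfb : ∀ j : Fin (2^(n-2)), f (b0 j) = aeval pb.gen (Q (j:ℕ)) := by
    intro j
    rw [hf, Matrix.toLin_self]
    rw [aeval_eq_sum_range' (n := 2^(n-2)) (by rw [hQdeg]; exact j.isLt)]
    rw [← Fin.sum_univ_eq_sum_range]
    refine Finset.sum_congr rfl ?_
    intro i _
    rw [hb0 i]
    rfl
  have hdet' : IsUnit (LinearMap.toMatrix b0 b0 f).det := by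
    rw [hf, LinearMap.toMatrix_toLin, hdet]
    exact isUnit_one
  refine ⟨b0.map (LinearEquiv.ofIsUnitDet hdet'), ?_⟩
  intro i
  have h1 : (b0.map (LinearEquiv.ofIsUnitDet hdet')) i = f (b0 i) := by
    rw [Module.Basis.map_apply]
    exact LinearMap.congr_fun (LinearEquiv.coe_ofIsUnitDet hdet') (b0 i)
  rw [h1, hfb]
  have hgenval : (Algebra.adjoin ℤ ({θ} : Set ℂ)).val pb.gen = θ := by
    rw [hpb, Algebra.adjoin.powerBasis'_gen]
    rfl
  have h2 : ((aeval pb.gen (Q (i:ℕ)) : M) : ℂ) = aeval θ (Q (i:ℕ)) := by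
    calc ((aeval pb.gen (Q (i:ℕ)) : M) : ℂ)
        = (Algebra.adjoin ℤ ({θ} : Set ℂ)).val (aeval pb.gen (Q (i:ℕ))) := rfl
      _ = aeval ((Algebra.adjoin ℤ ({θ} : Set ℂ)).val pb.gen) (Q (i:ℕ)) :=
          (Polynomial.aeval_algHom_apply _ _ _).symm
      _ = aeval θ (Q (i:ℕ)) := by rw [hgenval]
  rw [h2]
  rcases Nat.eq_zero_or_pos (i : ℕ) with h | h
  · simp [hQ, h]
  · rw [if_neg (by omega)]
    rw [hQ]
    simp only [if_neg (by omega : ¬ (i:ℕ) = 0)]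
    rw [aeval_def, eval₂_eq_eval_map, map_dickson, _root_.map_one,
      dickson_one_one_eval_add_inv α α⁻¹ (mul_inv_cancel₀ hα0)]
    rw [hs]
    rw [zpow_natCast, _root_.zpow_neg, zpow_natCast, inv_pow]
end

section
/- Let n ≥ 3, α = e^{2πi/2^n}, s_j = α^j + α^{-j}, and r_j = s_j + s_{2^{n-2}-j}. Then the family B = (1, s_1, …, s_{2^{n-3}-1}, s_{2^{n-3}}, r_1, …, r_{2^{n-3}-1}) is a ℤ-basis of the ring of integers ℤ[α + α^{-1}] of the maximal real subfield ℚ(α) ∩ ℝ. -/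
set_option maxHeartbeats 1000000
set_option synthInstance.maxHeartbeats 200000

open Polynomial IntermediateField

lemma aux_deg (m : ℕ) (α : ℂ) (hprim : IsPrimitiveRoot α (2 ^ (m + 3))) :
    2 ^ (m + 1) ≤ (minpoly ℚ (α + α⁻¹)).natDegree := by
  have hN : (2 : ℕ) ^ (m + 3) ≠ 0 := by positivity
  have hα0 : α ≠ 0 := hprim.ne_zero hN
  have hαint : IsIntegral ℚ α := (hprim.isIntegral (Nat.pos_of_ne_zero hN)).tower_top
  have hinv : α⁻¹ = α ^ (2 ^ (m + 3) - 1) := by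
    refine (inv_eq_of_mul_eq_one_right ?_)
    rw [← pow_succ']
    have : 2 ^ (m + 3) - 1 + 1 = 2 ^ (m + 3) := by
      have := Nat.one_le_two_pow (n := m + 3); omega
    rw [this, hprim.pow_eq_one]
  have hcint : IsIntegral ℚ (α + α⁻¹) := by
    refine hαint.add ?_
    rw [hinv]; exact hαint.pow _
  set K : IntermediateField ℚ ℂ := ℚ⟮α + α⁻¹⟯ with hK
  have hKfin : FiniteDimensional ℚ K := IntermediateField.adjoin.finiteDimensional hcint
  have hEα : IsIntegral K α := hαint.tower_top
  set E : IntermediateField K ℂ := K⟮α⟯ with hE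
  have hEfin : FiniteDimensional K E := IntermediateField.adjoin.finiteDimensional hEα
  -- finrank K E ≤ 2
  have hcK : algebraMap K ℂ (AdjoinSimple.gen ℚ (α + α⁻¹)) = α + α⁻¹ := rfl
  have hq2 : Module.finrank K E ≤ 2 := by
    rw [hE, IntermediateField.adjoin.finrank hEα]
    have hdeg : (minpoly K α).degree ≤ (X ^ 2 - C (AdjoinSimple.gen ℚ (α + α⁻¹)) * X + 1 : K[X]).degree := by
      apply minpoly.degree_le_of_ne_zero
      · intro h
        have := congrArg (fun p => Polynomial.coeff p 0) h
        simp at this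
      · simp only [map_add, map_sub, map_mul, map_pow, aeval_X, aeval_C, aeval_one, hcK]
        field_simp
        ring
    have hdq : (X ^ 2 - C (AdjoinSimple.gen ℚ (α + α⁻¹)) * X + 1 : K[X]).natDegree ≤ 2 := by
      compute_degree
    calc (minpoly K α).natDegree ≤ _ := Polynomial.natDegree_le_natDegree hdeg
      _ ≤ 2 := hdq
  -- finrank ℚ ℚ⟮α⟯ = 2 ^ (m+2)
  have hαdeg : Module.finrank ℚ ℚ⟮α⟯ = 2 ^ (m + 2) := by
    rw [IntermediateField.adjoin.finrank hαint,
      ← Polynomial.cyclotomic_eq_minpoly_rat hprim (Nat.pos_of_ne_zero hN),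
      Polynomial.natDegree_cyclotomic, Nat.totient_prime_pow Nat.prime_two (by omega)]
    simp [pow_succ]
  have hEfinQ : FiniteDimensional ℚ E := FiniteDimensional.trans ℚ K E
  have tower : Module.finrank ℚ K * Module.finrank K E = Module.finrank ℚ E :=
    Module.finrank_mul_finrank ℚ K E
  have hle : ℚ⟮α⟯ ≤ E.restrictScalars ℚ := by
    rw [adjoin_simple_le_iff]
    exact (IntermediateField.mem_restrictScalars ℚ).mpr (IntermediateField.mem_adjoin_simple_self K α)
  have hmono : Module.finrank ℚ ℚ⟮α⟯ ≤ Module.finrank ℚ (E.restrictScalars ℚ) := by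
    have : FiniteDimensional ℚ (E.restrictScalars ℚ) := hEfinQ
    exact LinearMap.finrank_le_finrank_of_injective
      (f := (IntermediateField.inclusion hle).toLinearMap)
      (IntermediateField.inclusion_injective hle)
  have hres : Module.finrank ℚ (E.restrictScalars ℚ) = Module.finrank ℚ E := rfl
  have hdegK : Module.finrank ℚ K = (minpoly ℚ (α + α⁻¹)).natDegree :=
    IntermediateField.adjoin.finrank hcint
  nlinarith [hαdeg, hmono, hres, tower, hq2, hdegK, pow_succ 2 (m+1)]


theorem stmt_12 (n : ℕ) (hn : 3 ≤ n)
    (α : ℂ) (hα : α = Complex.exp (2 * Real.pi * Complex.I / 2 ^ n))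
    (s : ℤ → ℂ) (hs : ∀ j : ℤ, s j = α ^ j + α ^ (-j))
    (r : ℤ → ℂ) (hr : ∀ j : ℤ, r j = s j + s (2 ^ (n - 2) - j)) :
    ∃ b : Module.Basis (Fin (2 ^ (n - 2))) ℤ (Algebra.adjoin ℤ ({α + α⁻¹} : Set ℂ)),
      ∀ i : Fin (2 ^ (n - 2)),
        (b i : ℂ) =
          if (i : ℕ) = 0 then 1
          else if (i : ℕ) ≤ 2 ^ (n - 3) then s ((i : ℕ) : ℤ)
          else r (((i : ℕ) : ℤ) - 2 ^ (n - 3)) := by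
  obtain ⟨m, rfl⟩ : ∃ m, n = m + 3 := ⟨n - 3, by omega⟩
  have e2 : m + 3 - 2 = m + 1 := by omega
  have e3 : m + 3 - 3 = m := by omega
  rw [e2, e3]
  simp only [hr, e2]
  clear hr r hn
  set c := α + α⁻¹ with hc
  have hN : (2 : ℕ) ^ (m + 3) ≠ 0 := by positivity
  have hprim : IsPrimitiveRoot α (2 ^ (m + 3)) := by
    have := Complex.isPrimitiveRoot_exp (2 ^ (m + 3)) hN
    rw [hα]; convert this using 3
    push_cast; ring
  have hα0 : α ≠ 0 := hprim.ne_zero hN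
  have hhalf : α ^ ((2:ℤ) ^ (m + 2)) = -1 := by
    have h1 : (α ^ ((2:ℤ) ^ (m + 2))) ^ 2 = 1 := by
      rw [← zpow_natCast _ 2, ← zpow_mul]
      have h : (2:ℤ) ^ (m + 2) * (2:ℕ) = (2 ^ (m + 3) : ℕ) := by push_cast; ring
      rw [h, zpow_natCast, hprim.pow_eq_one]
    have h2 : α ^ ((2:ℤ) ^ (m + 2)) ≠ 1 := by
      have := hprim.pow_ne_one_of_pos_of_lt (l := 2 ^ (m + 2)) (by positivity)
        (by have : (2:ℕ) ^ (m+2) < 2 ^ (m+3) := by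
              exact Nat.pow_lt_pow_right one_lt_two (by omega)
            exact this)
      rw [← zpow_natCast] at this
      convert this using 2
      push_cast; ring
    rcases mul_self_eq_one_iff.mp (by rw [sq] at h1; exact h1) with h | h
    · exact absurd h h2
    · exact h
  have hs_neg : ∀ j : ℤ, s (-j) = s j := fun j => by rw [hs, hs, neg_neg, add_comm]
  have hs_zero : s 0 = 2 := by rw [hs]; norm_num
  have hs_one : s 1 = c := by rw [hs, hc]; norm_num
  have hs_mul : ∀ i j : ℤ, s i * s j = s (i + j) + s (i - j) := by
    intro i j
    simp only [hs, neg_add, neg_sub, zpow_add₀ hα0, zpow_sub₀ hα0, zpow_neg]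
    field_simp
    ring
  have hs_shift : ∀ j : ℤ, s (j + 2 ^ (m + 2)) = -s j := by
    intro j
    simp only [hs, neg_add, zpow_add₀ hα0, hhalf, zpow_neg]
    norm_num
  have hs_refl : ∀ j : ℤ, s (2 ^ (m + 2) - j) = -s j := by
    intro j
    rw [sub_eq_neg_add, hs_shift, hs_neg]
  have hs_mem : ∀ t : ℕ, s (t : ℤ) ∈ Algebra.adjoin ℤ ({c} : Set ℂ) := by
    intro t
    rw [Algebra.adjoin_singleton_eq_range_aeval]
    refine ⟨Polynomial.dickson 1 1 t, ?_⟩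
    have h1 : Polynomial.aeval c (Polynomial.dickson 1 (1:ℤ) t)
        = Polynomial.eval c (Polynomial.dickson 1 (1:ℂ) t) := by
      rw [Polynomial.aeval_def, Polynomial.eval₂_eq_eval_map, Polynomial.map_dickson, map_one]
    show Polynomial.aeval c (Polynomial.dickson 1 (1:ℤ) t) = s t
    rw [h1, hc, Polynomial.dickson_one_one_eval_add_inv α α⁻¹ (mul_inv_cancel₀ hα0)]
    rw [hs, zpow_natCast, zpow_neg, zpow_natCast, inv_pow]
  -- the ℤ-span of 1 and all s j
  set G : Set ℂ := {1} ∪ Set.range s with hG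
  set S1 : Submodule ℤ ℂ := Submodule.span ℤ G with hS1def
  have h1G : (1 : ℂ) ∈ G := Or.inl rfl
  have hsG : ∀ j : ℤ, s j ∈ G := fun j => Or.inr ⟨j, rfl⟩
  have hS1_mul : ∀ x ∈ S1, ∀ y ∈ S1, x * y ∈ S1 := by
    intro x hx y hy
    induction hx, hy using Submodule.span_induction₂ with
    | mem_mem x y hx hy =>
      rcases hx with hx | ⟨i, rfl⟩
      · rcases hx with rfl
        rw [one_mul]; exact Submodule.subset_span hy
      · rcases hy with hy | ⟨j, rfl⟩
        · rcases hy with rfl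
          rw [mul_one]; exact Submodule.subset_span (hsG i)
        · rw [hs_mul]
          exact add_mem (Submodule.subset_span (hsG _)) (Submodule.subset_span (hsG _))
    | zero_left y hy => simp
    | zero_right x hx => simp
    | add_left x y z hx hy hz h1 h2 => rw [add_mul]; exact add_mem h1 h2
    | add_right x y z hx hy hz h1 h2 => rw [mul_add]; exact add_mem h1 h2
    | smul_left r x y hx hy hh => rw [smul_mul_assoc]; exact Submodule.smul_mem _ _ hh
    | smul_right r x y hx hy hh => rw [mul_smul_comm]; exact Submodule.smul_mem _ _ hh
  have hA_sub : ∀ x ∈ Algebra.adjoin ℤ ({c} : Set ℂ), x ∈ S1 := by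
    intro x hx
    induction hx using Algebra.adjoin_induction with
    | mem x hx =>
      rcases hx with rfl
      exact hs_one ▸ Submodule.subset_span (hsG 1)
    | algebraMap r =>
      have : (algebraMap ℤ ℂ r) = r • (1 : ℂ) := by simp
      rw [this]
      exact Submodule.smul_mem _ _ (Submodule.subset_span h1G)
    | add x y hx hy h1 h2 => exact add_mem h1 h2
    | mul x y hx hy h1 h2 => exact hS1_mul x h1 y h2
  -- the target family
  have hdpos : 0 < 2 ^ (m + 1) := by positivity
  have hm1 : 1 ≤ 2 ^ m := Nat.one_le_two_pow
  have hmd : 2 ^ m < 2 ^ (m + 1) := Nat.pow_lt_pow_right one_lt_two (by omega)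
  set tgt : Fin (2 ^ (m + 1)) → ℂ := fun i =>
    if (i : ℕ) = 0 then 1
    else if (i : ℕ) ≤ 2 ^ m then s ((i : ℕ) : ℤ)
    else s (((i : ℕ) : ℤ) - 2 ^ m) + s (2 ^ (m + 1) - (((i : ℕ) : ℤ) - 2 ^ m)) with htgt
  set S2 : Submodule ℤ ℂ := Submodule.span ℤ (Set.range tgt) with hS2def
  -- each tgt value is in S1
  have htgt_S1 : ∀ i, tgt i ∈ S1 := by
    intro i
    rw [htgt]
    dsimp only
    split_ifs
    · exact Submodule.subset_span h1G
    · exact Submodule.subset_span (hsG _)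
    · exact add_mem (Submodule.subset_span (hsG _)) (Submodule.subset_span (hsG _))
  have c1 : ((2 ^ m : ℕ) : ℤ) = 2 ^ m := by push_cast; ring
  have c2 : ((2 ^ (m + 1) : ℕ) : ℤ) = 2 ^ (m + 1) := by push_cast; ring
  have c3 : ((2 ^ (m + 2) : ℕ) : ℤ) = 2 ^ (m + 2) := by push_cast; ring
  -- every s j is in S2
  have hs_zero_S2 : s 0 ∈ S2 := by
    have h0 : tgt ⟨0, hdpos⟩ = 1 := by simp [htgt]
    have : s 0 = (2 : ℤ) • tgt ⟨0, hdpos⟩ := by rw [h0, hs_zero]; norm_num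
    rw [this]
    exact Submodule.smul_mem _ _ (Submodule.subset_span ⟨_, rfl⟩)
  have hnat : ∀ t : ℕ, s (t : ℤ) ∈ S2 := by
    intro t
    induction t using Nat.strong_induction_on with
    | _ t ih =>
      rcases Nat.lt_or_ge t (2 ^ (m + 1)) with htd | htd
      · rcases Nat.eq_zero_or_pos t with rfl | ht0
        · exact_mod_cast hs_zero_S2
        rcases le_or_gt t (2 ^ m) with hth | hth
        · have heq : tgt ⟨t, htd⟩ = s t := by
            simp [htgt, ht0.ne', hth]
          rw [← heq]
          exact Submodule.subset_span ⟨_, rfl⟩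
        · -- 2^m < t < 2^(m+1)
          have hi : 2 ^ m + (2 ^ (m + 1) - t) < 2 ^ (m + 1) := by omega
          have hiv : tgt ⟨2 ^ m + (2 ^ (m + 1) - t), hi⟩
              = s (2 ^ (m + 1) - (t : ℤ)) + s (t : ℤ) := by
            have hival : ((⟨2 ^ m + (2 ^ (m + 1) - t), hi⟩ : Fin (2 ^ (m + 1))) : ℕ)
                = 2 ^ m + (2 ^ (m + 1) - t) := rfl
            have h3 : ((⟨2 ^ m + (2 ^ (m + 1) - t), hi⟩ : Fin (2 ^ (m + 1))) : ℕ) ≠ 0 := by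
              rw [hival]; omega
            have h4 : ¬ (((⟨2 ^ m + (2 ^ (m + 1) - t), hi⟩ : Fin (2 ^ (m + 1))) : ℕ) ≤ 2 ^ m) := by
              rw [hival]; omega
            rw [htgt]
            simp only [if_neg h3, if_neg h4, hival]
            congr 1
            · congr 1
              simp only [← c1, ← c2]
              omega
            · congr 1
              simp only [← c1, ← c2]
              omega
          have hrec : s (2 ^ (m + 1) - (t : ℤ)) ∈ S2 := by
            have hc : ((2 ^ (m + 1) - t : ℕ) : ℤ) = 2 ^ (m + 1) - (t : ℤ) := by
              simp only [← c2]; omega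
            rw [← hc]
            exact ih _ (by omega)
          have : s (t : ℤ) = tgt ⟨2 ^ m + (2 ^ (m + 1) - t), hi⟩ - s (2 ^ (m + 1) - (t : ℤ)) := by
            rw [hiv]; ring
          rw [this]
          exact sub_mem (Submodule.subset_span ⟨_, rfl⟩) hrec
      · rcases Nat.lt_or_ge t (2 ^ (m + 2)) with h2 | h2
        · rcases Nat.eq_or_lt_of_le htd with heq | hlt
          · have h0 : s (t : ℤ) = - s (t : ℤ) := by
              have h5 := hs_refl (t : ℤ)
              have harg : (2 : ℤ) ^ (m + 2) - (t : ℤ) = (t : ℤ) := by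
                rw [← heq, c2]; ring
              rwa [harg] at h5
            have : s (t : ℤ) = 0 := by linear_combination (1/2 : ℂ) * h0
            rw [this]; exact zero_mem _
          · have key : s (t : ℤ) = - s (2 ^ (m + 2) - (t : ℤ)) := by
              have h5 := hs_refl ((2 : ℤ) ^ (m + 2) - (t : ℤ))
              have harg : (2 : ℤ) ^ (m + 2) - ((2 : ℤ) ^ (m + 2) - (t : ℤ)) = (t : ℤ) := by ring
              rw [harg] at h5
              rw [h5]
            have hc : ((2 ^ (m + 2) - t : ℕ) : ℤ) = 2 ^ (m + 2) - (t : ℤ) := by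
              rw [Nat.cast_sub h2.le]; push_cast; ring
            rw [key, ← hc]
            have e4 : (2:ℕ) ^ (m + 2) = 4 * 2 ^ m := by ring
            have e21 : (2:ℕ) ^ (m + 1) = 2 * 2 ^ m := by ring
            exact neg_mem (ih _ (by omega))
        · have key : s (t : ℤ) = - s ((t : ℤ) - 2 ^ (m + 2)) := by
            have h5 := hs_shift ((t : ℤ) - 2 ^ (m + 2))
            have harg : (t : ℤ) - 2 ^ (m + 2) + 2 ^ (m + 2) = (t : ℤ) := by ring
            rw [harg] at h5
            rw [h5]
          have hc : ((t - 2 ^ (m + 2) : ℕ) : ℤ) = (t : ℤ) - 2 ^ (m + 2) := by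
            rw [Nat.cast_sub h2]; push_cast; ring
          rw [key, ← hc]
          have h4 : 0 < 2 ^ (m + 2) := by positivity
          exact neg_mem (ih _ (by omega))

  have hint : ∀ j : ℤ, s j ∈ S2 := by
    intro j
    rcases Int.natAbs_eq j with h | h
    · rw [h]; exact hnat _
    · rw [h, ← hs_neg, neg_neg]; exact hnat _
  have hS12 : S1 = S2 := by
    apply le_antisymm
    · rw [hS1def]
      apply Submodule.span_le.mpr
      rintro x (rfl | ⟨j, rfl⟩)
      · have h0 : tgt ⟨0, hdpos⟩ = 1 := by simp [htgt]
        exact h0 ▸ Submodule.subset_span ⟨_, rfl⟩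
      · exact hint j
    · rw [hS2def]
      apply Submodule.span_le.mpr
      rintro x ⟨i, rfl⟩
      exact htgt_S1 i
  -- membership of tgt values in the adjoin
  have htgt_mem : ∀ i, tgt i ∈ Algebra.adjoin ℤ ({c} : Set ℂ) := by
    intro i
    rw [htgt]
    dsimp only
    split_ifs with h1 h2
    · exact one_mem _
    · exact hs_mem (i : ℕ)
    · push_neg at h2
      have ha : ((i : ℕ) : ℤ) - 2 ^ m = (((i : ℕ) - 2 ^ m : ℕ) : ℤ) := by
        rw [Nat.cast_sub h2.le]; push_cast; ring
      have hb : (2 : ℤ) ^ (m + 1) - (((i : ℕ) : ℤ) - 2 ^ m)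
          = ((2 ^ (m + 1) - ((i : ℕ) - 2 ^ m) : ℕ) : ℤ) := by
        rw [Nat.cast_sub (by omega), Nat.cast_sub h2.le]; push_cast; ring
      rw [hb, ha]
      exact add_mem (hs_mem _) (hs_mem _)
  set v : Fin (2 ^ (m + 1)) → (Algebra.adjoin ℤ ({c} : Set ℂ)) :=
    fun i => ⟨tgt i, htgt_mem i⟩ with hv
  -- spanning
  have hspan : ⊤ ≤ Submodule.span ℤ (Set.range v) := by
    intro a _
    have hmem : (a : ℂ) ∈ S2 := hS12 ▸ hA_sub _ a.2
    have hrange : Set.range tgt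
        = ((Subalgebra.toSubmodule (Algebra.adjoin ℤ ({c} : Set ℂ))).subtype) '' (Set.range v) := by
      rw [← Set.range_comp]; rfl
    rw [hS2def, hrange, ← Submodule.map_span] at hmem
    obtain ⟨b', hb', hba⟩ := hmem
    have hba' : b' = a := Subtype.ext hba
    rwa [← hba']
  -- linear independence
  have hdeg := aux_deg m α hprim
  have hpowli : LinearIndependent ℚ (fun i : Fin (2 ^ (m + 1)) => c ^ (i : ℕ)) :=
    (linearIndependent_pow (K := ℚ) (S := ℂ) c).comp (Fin.castLE hdeg) (Fin.castLE_injective _)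
  have hsub : ∀ k : Fin (2 ^ (m + 1)),
      c ^ (k : ℕ) ∈ Submodule.span ℚ (Set.range tgt) := by
    intro k
    have h1 : c ^ (k : ℕ) ∈ S2 := by
      rw [← hS12]
      exact hA_sub _ (pow_mem (Algebra.self_mem_adjoin_singleton ℤ c) _)
    rw [hS2def] at h1
    have : Submodule.span ℤ (Set.range tgt)
        ≤ (Submodule.span ℚ (Set.range tgt)).restrictScalars ℤ :=
      Submodule.span_le.mpr (Submodule.subset_span (R := ℚ))
    exact this h1
  have hliQ : LinearIndependent ℚ tgt := by
    rw [linearIndependent_iff_card_eq_finrank_span]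
    have hfin : FiniteDimensional ℚ (Submodule.span ℚ (Set.range tgt)) :=
      FiniteDimensional.span_of_finite ℚ (Set.finite_range tgt)
    have hle1 : Set.finrank ℚ (Set.range tgt) ≤ 2 ^ (m + 1) := by
      simpa using finrank_range_le_card tgt
    have hge1 : 2 ^ (m + 1) ≤ Set.finrank ℚ (Set.range tgt) := by
      have hpw : LinearIndependent ℚ
          (fun k : Fin (2 ^ (m + 1)) =>
            (⟨c ^ (k : ℕ), hsub k⟩ : Submodule.span ℚ (Set.range tgt))) := by
        apply LinearIndependent.of_comp (Submodule.span ℚ (Set.range tgt)).subtype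
        exact hpowli
      simpa [Set.finrank] using hpw.fintype_card_le_finrank
    simp only [Fintype.card_fin]
    omega
  have hliZ : LinearIndependent ℤ tgt := by
    apply hliQ.restrict_scalars
    intro a b hab
    have : (a : ℚ) = (b : ℚ) := by simpa using hab
    exact_mod_cast this
  have hliv : LinearIndependent ℤ v := by
    apply LinearIndependent.of_comp
      ((Subalgebra.toSubmodule (Algebra.adjoin ℤ ({c} : Set ℂ))).subtype)
    exact hliZ
  refine ⟨Module.Basis.mk hliv hspan, ?_⟩
  intro i
  rw [Module.Basis.mk_apply]
end

section
/- Let n ≥ 3, α = e^{2πi/2^n}, s_j = α^j + α^{-j}, and r_j = s_j + s_{2^{n-2}-j}. Let R_ℤ be the additive subgroup of ℤ[α+α^{-1}] generated by r_1, …, r_{2^{n-3}-1}. Then R̃ = R_ℤ + 2ℤ[α+α^{-1}] is an ideal of the ring ℤ[α+α^{-1}], and R_ℤ · R_ℤ ⊆ 2ℤ[α+α^{-1}]. -/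
theorem stmt_13 (n : ℕ) (hn : 3 ≤ n)
    (α : ℂ) (hα : α = Complex.exp (2 * Real.pi * Complex.I / 2 ^ n))
    (s : ℤ → ℂ) (hs : ∀ j : ℤ, s j = α ^ j + α ^ (-j))
    (r : ℤ → ℂ) (hr : ∀ j : ℤ, r j = s j + s (2 ^ (n - 2) - j))
    (A : Subalgebra ℤ ℂ) (hA : A = Algebra.adjoin ℤ ({α + α⁻¹} : Set ℂ))
    (RZ : AddSubgroup ℂ)
    (hRZ : RZ = AddSubgroup.closure
      {x : ℂ | ∃ j : ℕ, 1 ≤ j ∧ j ≤ 2 ^ (n - 3) - 1 ∧ x = r j})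
    (Rt : Set ℂ)
    (hRt : Rt = {z : ℂ | ∃ x ∈ RZ, ∃ y ∈ A, z = x + 2 * y}) :
    (Rt ⊆ (A : Set ℂ)) ∧
    (∀ x ∈ Rt, ∀ y ∈ Rt, x + y ∈ Rt) ∧
    (∀ x ∈ Rt, -x ∈ Rt) ∧
    (∀ a ∈ A, ∀ x ∈ Rt, a * x ∈ Rt) ∧
    (∀ x ∈ RZ, ∀ y ∈ RZ, ∃ z ∈ A, x * y = 2 * z) := by
  have hα0 : α ≠ 0 := by rw [hα]; exact Complex.exp_ne_zero _
  set m : ℤ := 2 ^ (n - 2) with hm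
  -- α ^ m = I
  have hmI : α ^ m = Complex.I := by
    have hpow : α ^ ((2:ℕ) ^ (n-2)) = Complex.I := by
      rw [hα, ← Complex.exp_nat_mul]
      have h2 : (2:ℂ) ^ n = (2:ℂ) ^ (n-2) * 4 := by
        have hnn : n = (n-2) + 2 := by omega
        rw [hnn, pow_add]
        norm_num
      have hne : ((2:ℂ) ^ (n-2)) ≠ 0 := pow_ne_zero _ two_ne_zero
      have harg : ((2 ^ (n-2) : ℕ) : ℂ) * (2 * Real.pi * Complex.I / 2 ^ n)
          = (Real.pi/2 : ℂ) * Complex.I := by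
        push_cast
        rw [h2]
        field_simp
        ring
      rw [harg, Complex.exp_mul_I]
      rw [Complex.cos_pi_div_two, Complex.sin_pi_div_two]
      ring
    rw [← hpow, hm]
    norm_cast
  clear_value m
  have hinv : α⁻¹ = α ^ (-1 : ℤ) := (zpow_neg_one α).symm
  have hf : ∀ a b : ℤ, α ^ a * α ^ b = α ^ (a + b) := fun a b => (zpow_add₀ hα0 a b).symm
  obtain ⟨f, hzf⟩ : ∃ f : ℤ → ℂ, ∀ e : ℤ, α ^ e = f e := ⟨fun t => α ^ t, fun _ => rfl⟩
  have hfmul : ∀ a b : ℤ, f a * f b = f (a + b) := by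
    intro a b
    rw [← hzf, ← hzf, ← hzf]
    exact (zpow_add₀ hα0 a b).symm
  have hβf : α + α⁻¹ = f 1 + f (-1) := by
    rw [← hzf, ← hzf, zpow_one, zpow_neg_one]
  have h2m : f (2 * m) = -1 := by
    rw [two_mul, ← hfmul, ← hzf, hmI, Complex.I_mul_I]
  have hflip : ∀ t : ℤ, f (m + t) + f (t - m) = 0 := by
    intro t
    have h : f (m + t) = f (2*m) * f (t - m) := by
      rw [hfmul]; congr 1; ring
    rw [h, h2m]; ring
  -- β ∈ A
  have hβA : α + α⁻¹ ∈ A := by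
    rw [hA]; exact Algebra.subset_adjoin rfl
  have h2A : (2:ℂ) ∈ A := by
    have h : (2:ℂ) = 1 + 1 := by norm_num
    rw [h]; exact A.add_mem A.one_mem A.one_mem
  -- recurrence
  have hrec : ∀ l : ℤ, s (l + 1) = (α + α⁻¹) * s l - s (l - 1) := by
    intro l
    rw [hβf]
    simp only [hs, hzf, mul_add, add_mul, hfmul]
    ring_nf
  -- s l ∈ A
  have hsnat : ∀ k : ℕ, s k ∈ A ∧ s ((k:ℤ) + 1) ∈ A := by
    intro k
    induction k with
    | zero =>
      constructor
      · have h : s ((0:ℕ):ℤ) = 2 := by rw [hs]; norm_num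
        rw [h]; exact h2A
      · have e : ((0:ℕ):ℤ) + 1 = 1 := by norm_num
        have h : s (((0:ℕ):ℤ) + 1) = α + α⁻¹ := by
          rw [e, hs, zpow_one, zpow_neg_one]
        rw [h]; exact hβA
    | succ k ih =>
      constructor
      · have h : ((k+1:ℕ):ℤ) = (k:ℤ) + 1 := by push_cast; ring
        rw [h]; exact ih.2
      · have h := hrec ((k:ℤ) + 1)
        have e2 : ((k:ℤ) + 1) - 1 = (k : ℤ) := by ring
        rw [e2] at h
        have e3 : ((k+1:ℕ):ℤ) + 1 = ((k:ℤ) + 1) + 1 := by push_cast; ring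
        rw [e3, h]
        exact A.sub_mem (A.mul_mem hβA ih.2) ih.1
  have hsA : ∀ l : ℤ, s l ∈ A := by
    intro l
    rcases Int.natAbs_eq l with h | h
    · rw [h]; exact (hsnat l.natAbs).1
    · have hsneg : ∀ t : ℤ, s (-t) = s t := by
        intro t
        simp only [hs, hzf]
        ring_nf
      rw [h, hsneg]; exact (hsnat l.natAbs).1
  have hrA : ∀ j : ℤ, r j ∈ A := fun j => by
    rw [hr]; exact A.add_mem (hsA j) (hsA _)
  -- RZ ⊆ A
  have hRZA : ∀ x ∈ RZ, x ∈ A := by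
    rw [hRZ]
    intro x hx
    induction hx using AddSubgroup.closure_induction with
    | mem x hx => obtain ⟨j, _, _, rfl⟩ := hx; exact hrA j
    | zero => exact A.zero_mem
    | add x y _ _ hx hy => exact A.add_mem hx hy
    | neg x _ hx => exact A.neg_mem hx
  -- key product identity
  have keyprod : ∀ j k : ℤ, r j * r k = 2 * (s (j - k) + s (j + k - m)) := by
    intro j k
    simp only [hr, hs, hzf, mul_add, add_mul, hfmul]
    linear_combination (norm := ring_nf) hflip (j + k - m) + hflip (m - j - k) + hflip (j - k) + hflip (k - j)
  -- multiplication identity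
  have hB : ∀ j : ℤ, (α + α⁻¹) * r j = r (j + 1) + r (j - 1) := by
    intro j
    rw [hβf]
    simp only [hr, hs, hzf, mul_add, add_mul, hfmul]
    ring_nf
  -- r 0 = 2
  have hr0 : r 0 = 2 := by
    rw [hr, hs, hs]
    have h1 : α ^ (m - 0) = Complex.I := by rw [sub_zero, hmI]
    have h2 : α ^ (-(m - 0)) = -Complex.I := by
      rw [zpow_neg, h1, Complex.inv_I]
    rw [h1, h2]
    norm_num
  -- r (2^(n-3)) = 2 * s (2^(n-3))
  have hhalf : m = 2 * 2 ^ (n - 3) := by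
    rw [hm]
    have h : n - 2 = (n - 3) + 1 := by omega
    rw [h, pow_succ]; ring
  have hrhalf : r (2 ^ (n-3) : ℤ) = 2 * s (2 ^ (n-3) : ℤ) := by
    rw [hr]
    have h : m - 2 ^ (n-3) = (2 ^ (n-3) : ℤ) := by rw [hhalf]; ring
    rw [h]; ring
  -- membership of generators
  have hgen : ∀ j : ℕ, 1 ≤ j → j ≤ 2 ^ (n-3) - 1 → r j ∈ RZ := by
    intro j h1 h2
    rw [hRZ]
    exact AddSubgroup.subset_closure ⟨j, h1, h2, rfl⟩
  -- β * x decomposes for x ∈ RZ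
  have hBRZ : ∀ x ∈ RZ, ∃ u ∈ RZ, ∃ v ∈ A, (α + α⁻¹) * x = u + 2 * v := by
    intro x hx
    have hx' : x ∈ AddSubgroup.closure
        {x : ℂ | ∃ j : ℕ, 1 ≤ j ∧ j ≤ 2 ^ (n - 3) - 1 ∧ x = r j} := hRZ ▸ hx
    clear hx
    induction hx' using AddSubgroup.closure_induction with
    | mem x hxg =>
      obtain ⟨j, hj1, hj2, rfl⟩ := hxg
      have h2n3 : 2 ≤ 2 ^ (n-3) := by omega
      have hup : ∃ u1 ∈ RZ, ∃ v1 ∈ A, r ((j:ℤ) + 1) = u1 + 2 * v1 := by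
        by_cases hc : j + 1 ≤ 2 ^ (n-3) - 1
        · refine ⟨r ((j:ℤ)+1), ?_, 0, A.zero_mem, by ring⟩
          have h : ((j:ℤ)+1) = ((j+1 : ℕ):ℤ) := by push_cast; ring
          rw [h]
          exact hgen (j+1) (by omega) hc
        · have hj1' : (j:ℤ) + 1 = (2 ^ (n-3) : ℤ) := by
            have h' : j + 1 = 2 ^ (n-3) := by omega
            have h'' := congrArg (Nat.cast : ℕ → ℤ) h'
            push_cast at h''
            linarith
          refine ⟨0, RZ.zero_mem, s (2 ^ (n-3) : ℤ), hsA _, ?_⟩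
          rw [hj1', hrhalf]; ring
      have hdown : ∃ u2 ∈ RZ, ∃ v2 ∈ A, r ((j:ℤ) - 1) = u2 + 2 * v2 := by
        by_cases hc : 2 ≤ j
        · refine ⟨r ((j:ℤ)-1), ?_, 0, A.zero_mem, by ring⟩
          have h : ((j:ℤ)-1) = ((j-1 : ℕ):ℤ) := by omega
          rw [h]
          exact hgen (j-1) (by omega) (by omega)
        · have hj1' : (j:ℤ) - 1 = 0 := by omega
          refine ⟨0, RZ.zero_mem, 1, A.one_mem, ?_⟩
          rw [hj1', hr0]; ring
      obtain ⟨u1, hu1, v1, hv1, e1⟩ := hup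
      obtain ⟨u2, hu2, v2, hv2, e2⟩ := hdown
      refine ⟨u1 + u2, RZ.add_mem hu1 hu2, v1 + v2, A.add_mem hv1 hv2, ?_⟩
      rw [hB (j:ℤ), e1, e2]; ring
    | zero => exact ⟨0, RZ.zero_mem, 0, A.zero_mem, by ring⟩
    | add x y hxc hyc ihx ihy =>
      obtain ⟨u1, hu1, v1, hv1, e1⟩ := ihx
      obtain ⟨u2, hu2, v2, hv2, e2⟩ := ihy
      exact ⟨u1 + u2, RZ.add_mem hu1 hu2, v1 + v2, A.add_mem hv1 hv2,
        by rw [mul_add, e1, e2]; ring⟩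
    | neg x hxc ihx =>
      obtain ⟨u1, hu1, v1, hv1, e1⟩ := ihx
      exact ⟨-u1, RZ.neg_mem hu1, -v1, A.neg_mem hv1, by rw [mul_neg, e1]; ring⟩
  -- additive closure of Rt
  have haddRt : ∀ x ∈ Rt, ∀ y ∈ Rt, x + y ∈ Rt := by
    intro x hx y hy
    rw [hRt] at hx hy ⊢
    obtain ⟨x0, hx0, y0, hy0, rfl⟩ := hx
    obtain ⟨x1, hx1, y1, hy1, rfl⟩ := hy
    exact ⟨x0 + x1, RZ.add_mem hx0 hx1, y0 + y1, A.add_mem hy0 hy1, by ring⟩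
  have hnegRt : ∀ x ∈ Rt, -x ∈ Rt := by
    intro x hx
    rw [hRt] at hx ⊢
    obtain ⟨x0, hx0, y0, hy0, rfl⟩ := hx
    exact ⟨-x0, RZ.neg_mem hx0, -y0, A.neg_mem hy0, by ring⟩
  have hsub : Rt ⊆ (A : Set ℂ) := by
    intro z hz
    rw [hRt] at hz
    obtain ⟨x0, hx0, y0, hy0, rfl⟩ := hz
    exact A.add_mem (hRZA x0 hx0) (A.mul_mem h2A hy0)
  have hideal : ∀ a ∈ A, ∀ x ∈ Rt, a * x ∈ Rt := by
    intro a ha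
    rw [hA] at ha
    induction ha using Algebra.adjoin_induction with
    | mem b hb =>
      obtain rfl := hb
      intro x hx
      rw [hRt] at hx ⊢
      obtain ⟨x0, hx0, y0, hy0, rfl⟩ := hx
      obtain ⟨u, hu, v, hv, e⟩ := hBRZ x0 hx0
      refine ⟨u, hu, v + (α + α⁻¹) * y0, A.add_mem hv (A.mul_mem hβA hy0), ?_⟩
      rw [mul_add, e]; ring
    | algebraMap k =>
      intro x hx
      rw [hRt] at hx ⊢
      obtain ⟨x0, hx0, y0, hy0, rfl⟩ := hx
      have hk : (algebraMap ℤ ℂ) k = (k : ℂ) := by simp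
      have hkA : ((k:ℂ)) ∈ A := by
        rw [← hk]; exact A.algebraMap_mem k
      refine ⟨k • x0, AddSubgroup.zsmul_mem RZ hx0 k, (k:ℂ) * y0, A.mul_mem hkA hy0, ?_⟩
      rw [hk, zsmul_eq_mul]
      ring
    | add a b hac hbc iha ihb =>
      intro x hx
      rw [add_mul]
      exact haddRt _ (iha x hx) _ (ihb x hx)
    | mul a b hac hbc iha ihb =>
      intro x hx
      rw [mul_assoc]
      exact iha _ (ihb x hx)
  have hprod : ∀ x ∈ RZ, ∀ y ∈ RZ, ∃ z ∈ A, x * y = 2 * z := by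
    intro x hx
    have hx' : x ∈ AddSubgroup.closure
        {x : ℂ | ∃ j : ℕ, 1 ≤ j ∧ j ≤ 2 ^ (n - 3) - 1 ∧ x = r j} := hRZ ▸ hx
    clear hx
    induction hx' using AddSubgroup.closure_induction with
    | mem x hxg =>
      intro y hy
      have hy' : y ∈ AddSubgroup.closure
          {x : ℂ | ∃ j : ℕ, 1 ≤ j ∧ j ≤ 2 ^ (n - 3) - 1 ∧ x = r j} := hRZ ▸ hy
      clear hy
      induction hy' using AddSubgroup.closure_induction with
      | mem y hyg =>
        obtain ⟨j, _, _, rfl⟩ := hxg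
        obtain ⟨k, _, _, rfl⟩ := hyg
        exact ⟨s ((j:ℤ) - k) + s ((j:ℤ) + k - m), A.add_mem (hsA _) (hsA _), keyprod j k⟩
      | zero => exact ⟨0, A.zero_mem, by ring⟩
      | add y z hyc hzc ihy ihz =>
        obtain ⟨z1, h1, e1⟩ := ihy
        obtain ⟨z2, h2, e2⟩ := ihz
        exact ⟨z1 + z2, A.add_mem h1 h2, by rw [mul_add, e1, e2]; ring⟩
      | neg y hyc ihy =>
        obtain ⟨z1, h1, e1⟩ := ihy
        exact ⟨-z1, A.neg_mem h1, by rw [mul_neg, e1]; ring⟩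
    | zero => intro y hy; exact ⟨0, A.zero_mem, by ring⟩
    | add x x' hxc hxc' ih ih' =>
      intro y hy
      obtain ⟨z1, h1, e1⟩ := ih y hy
      obtain ⟨z2, h2, e2⟩ := ih' y hy
      exact ⟨z1 + z2, A.add_mem h1 h2, by rw [add_mul, e1, e2]; ring⟩
    | neg x hxc ih =>
      intro y hy
      obtain ⟨z1, h1, e1⟩ := ih y hy
      exact ⟨-z1, A.neg_mem h1, by rw [neg_mul, e1]; ring⟩
  exact ⟨hsub, haddRt, hnegRt, hideal, hprod⟩
end

section
/- Let n ≥ 3, α = e^{2πi/2^n}, and d_j = 1 + α^j + α^{-j}. Then for every odd j and every natural number l, d_j^{2^l} ≡ d_{2^l j} (mod 2ℤ[α]); in particular d_j^{2^{n-2}} ≡ 1 (mod 2ℤ[α]). -/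
theorem stmt_17 (n : ℕ) (hn : 3 ≤ n)
    (α : ℂ) (hα : α = Complex.exp (2 * Real.pi * Complex.I / 2 ^ n))
    (d : ℤ → ℂ) (hd : ∀ j : ℤ, d j = 1 + α ^ j + α ^ (-j)) :
    ∀ j : ℤ, Odd j →
      (∀ l : ℕ, ∃ x ∈ Algebra.adjoin ℤ ({α} : Set ℂ),
        d j ^ (2 ^ l) - d (2 ^ l * j) = 2 * x) ∧
      (∃ x ∈ Algebra.adjoin ℤ ({α} : Set ℂ),
        d j ^ (2 ^ (n - 2)) - 1 = 2 * x) := by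
  have hα0 : α ≠ 0 := by rw [hα]; exact Complex.exp_ne_zero _
  have h2n : ((2:ℂ)^n) ≠ 0 := pow_ne_zero _ two_ne_zero
  have hroot : α ^ (2^n : ℕ) = 1 := by
    rw [hα, ← Complex.exp_nat_mul]
    rw [show ((2^n : ℕ):ℂ) * (2 * Real.pi * Complex.I / 2^n)
        = 2 * Real.pi * Complex.I by push_cast; field_simp]
    exact Complex.exp_two_pi_mul_I
  set R := Algebra.adjoin ℤ ({α} : Set ℂ) with hR
  have hαR : α ∈ R := Algebra.subset_adjoin rfl
  have hinv : α⁻¹ = α ^ (2^n - 1 : ℕ) := by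
    apply inv_eq_of_mul_eq_one_right
    rw [← pow_succ']
    rw [show 2^n - 1 + 1 = 2^n from by have := Nat.one_le_two_pow (n := n); omega]
    exact hroot
  have hzmem : ∀ m : ℤ, α ^ m ∈ R := by
    intro m
    cases m with
    | ofNat k => simpa using pow_mem hαR k
    | negSucc k =>
      rw [zpow_negSucc, ← inv_pow, hinv, ← pow_mul]
      exact pow_mem hαR _
  have hdmem : ∀ m : ℤ, d m ∈ R := by
    intro m; rw [hd]
    exact add_mem (add_mem (one_mem R) (hzmem m)) (hzmem (-m))
  have hsq : ∀ m : ℤ, d m ^ 2 = d (2*m) + 2 * d m := by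
    intro m
    have hmm : α ^ m * α ^ (-m) = 1 := by
      rw [← zpow_add₀ hα0]; simp
    have h2 : α ^ (2*m) = α^m * α^m := by rw [two_mul, zpow_add₀ hα0]
    have h2' : α ^ (-(2*m)) = α^(-m) * α^(-m) := by
      rw [show -(2*m) = -m + -m by ring, zpow_add₀ hα0]
    rw [hd, hd, h2, h2']
    linear_combination 2 * hmm
  intro j hj
  have main : ∀ l : ℕ, ∃ x ∈ R, d j ^ (2^l) - d (2^l * j) = 2 * x := by
    intro l
    induction l with
    | zero => exact ⟨0, zero_mem R, by simp⟩
    | succ l ih =>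
      obtain ⟨x, hxR, hx⟩ := ih
      have hDR := hdmem ((2:ℤ)^l * j)
      refine ⟨d (2^l * j) + (x * d (2^l*j) + x * d (2^l*j)) + (x^2 + x^2),
        add_mem (add_mem hDR (add_mem (mul_mem hxR hDR) (mul_mem hxR hDR)))
          (add_mem (pow_mem hxR 2) (pow_mem hxR 2)), ?_⟩
      have hp : d j ^ (2^(l+1)) = (d j ^ (2^l))^2 := by
        rw [← pow_mul, pow_succ]
      have hm : ((2:ℤ)^(l+1) * j) = 2 * (2^l * j) := by push_cast; ring
      rw [hp, hm]
      linear_combination (d j ^ 2^l + d (2^l*j) + 2*x) * hx + hsq (2^l * j)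
  refine ⟨main, ?_⟩
  have hI : α ^ (2^(n-2) : ℕ) = Complex.I := by
    rw [hα, ← Complex.exp_nat_mul]
    have hkey : ((2^(n-2):ℕ):ℂ) * (2 * Real.pi * Complex.I / 2^n)
        = (↑(Real.pi/2)) * Complex.I := by
      have hn' : n = (n-2) + 2 := by omega
      have h4 : (2:ℂ)^n = 2^(n-2) * 4 := by nth_rewrite 1 [hn']; rw [pow_add]; norm_num
      have hne : ((2:ℂ)^(n-2)) ≠ 0 := pow_ne_zero _ two_ne_zero
      push_cast
      rw [h4]
      field_simp
      ring
    rw [hkey, Complex.exp_mul_I]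
    push_cast
    rw [Complex.cos_pi_div_two, Complex.sin_pi_div_two]
    ring
  have hIj : ∀ m : ℤ, α ^ ((2^(n-2) : ℤ) * m) = Complex.I ^ m := by
    intro m
    rw [zpow_mul]
    congr 1
  have hd1 : d (2^(n-2) * j) = 1 := by
    obtain ⟨k, hk⟩ := hj
    have hI2 : Complex.I ^ (2:ℤ) = -1 := by
      rw [show (2:ℤ) = ((2:ℕ):ℤ) by rfl, zpow_natCast, Complex.I_sq]
    have hIjval : Complex.I ^ j = (-1)^k * Complex.I := by
      rw [hk, zpow_add₀ Complex.I_ne_zero, zpow_mul, hI2, zpow_one]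
    have hIjneg : Complex.I ^ (-j) = (-1)^k * (-Complex.I) := by
      rw [zpow_neg, hIjval, mul_inv, ← inv_zpow, inv_neg, inv_one, Complex.inv_I]
    rw [hd, show -((2:ℤ)^(n-2) * j) = (2^(n-2):ℤ) * (-j) by ring,
      hIj j, hIj (-j), hIjval, hIjneg]
    ring
  obtain ⟨x, hxR, hx⟩ := main (n-2)
  exact ⟨x, hxR, by rw [← hd1]; exact hx⟩
end

section
/- Let n ≥ 4, α = e^{2πi/2^n}, and d_1 = 1 + α + α^{-1}. Then for every k ∈ {0, 1, …, n-3}, d_1^{2^k} is NOT congruent to 1 modulo 2ℤ[α]; in particular d_1^{2^{n-3}} ≡ 1 + √2 (mod 2ℤ[α]) and √2/2 is not an algebraic integer. -/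
open Polynomial

private lemma frob3 {R : Type*} [CommRing R] (a b c : R) (k : ℕ) :
    ∃ z : R, (a + b + c) ^ (2 ^ k) = a ^ (2 ^ k) + b ^ (2 ^ k) + c ^ (2 ^ k) + 2 * z := by
  induction k with
  | zero => exact ⟨0, by ring⟩
  | succ k ih =>
    obtain ⟨z, hz⟩ := ih
    have e : ∀ x : R, x ^ 2 ^ (k + 1) = (x ^ 2 ^ k) ^ 2 := fun x => by
      rw [← pow_mul, pow_succ]
    refine ⟨a ^ 2 ^ k * b ^ 2 ^ k + a ^ 2 ^ k * c ^ 2 ^ k + b ^ 2 ^ k * c ^ 2 ^ k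
      + 2 * z * (a ^ 2 ^ k + b ^ 2 ^ k + c ^ 2 ^ k) + 2 * z ^ 2, ?_⟩
    rw [e (a + b + c), e a, e b, e c, hz]
    ring

theorem stmt_18 (n : ℕ) (hn : 4 ≤ n)
    (α : ℂ) (hα : α = Complex.exp (2 * Real.pi * Complex.I / 2 ^ n))
    (d₁ : ℂ) (hd : d₁ = 1 + α + α⁻¹) :
    (∀ k : ℕ, k ≤ n - 3 →
      ¬ ∃ x ∈ Algebra.adjoin ℤ ({α} : Set ℂ), d₁ ^ (2 ^ k) - 1 = 2 * x) ∧
    (∃ x ∈ Algebra.adjoin ℤ ({α} : Set ℂ),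
      d₁ ^ (2 ^ (n - 3)) - (1 + (Real.sqrt 2 : ℂ)) = 2 * x) ∧
    ¬ IsIntegral ℤ ((Real.sqrt 2 : ℂ) / 2) := by
  have h2n : (2 : ℕ) ^ n ≠ 0 := by positivity
  have hprim : IsPrimitiveRoot α ((2 : ℕ) ^ n) := by
    have := Complex.isPrimitiveRoot_exp ((2 : ℕ) ^ n) h2n
    have hcast : ((((2 : ℕ) ^ n : ℕ) : ℂ)) = (2 : ℂ) ^ n := by push_cast; ring
    rwa [hα, ← hcast]
  have hα0 : α ≠ 0 := by rw [hα]; exact Complex.exp_ne_zero _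
  have hαA : α ∈ Algebra.adjoin ℤ ({α} : Set ℂ) :=
    Algebra.self_mem_adjoin_singleton ℤ α
  have hinv : α⁻¹ = α ^ ((2 : ℕ) ^ n - 1) := by
    have h1 : α * α ^ ((2 : ℕ) ^ n - 1) = 1 := by
      have h1n : 1 ≤ (2:ℕ)^n := Nat.one_le_two_pow
      rw [← pow_succ', show ((2:ℕ)^n - 1) + 1 = 2 ^ n by omega]
      exact hprim.pow_eq_one
    exact inv_eq_of_mul_eq_one_right h1
  have hinvA : α⁻¹ ∈ Algebra.adjoin ℤ ({α} : Set ℂ) := by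
    rw [hinv]; exact pow_mem hαA _
  -- key congruence : d₁ ^ 2^k = 1 + α^2^k + α⁻¹^2^k + 2 * x with x in the adjoin
  have key : ∀ k : ℕ, ∃ x ∈ Algebra.adjoin ℤ ({α} : Set ℂ),
      d₁ ^ (2 ^ k) = 1 + α ^ (2 ^ k) + (α⁻¹) ^ (2 ^ k) + 2 * x := by
    intro k
    obtain ⟨z, hz⟩ := frob3 (1 : Algebra.adjoin ℤ ({α} : Set ℂ)) ⟨α, hαA⟩ ⟨α⁻¹, hinvA⟩ k
    refine ⟨(z : ℂ), z.2, ?_⟩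
    have := congrArg (Subtype.val) hz
    push_cast at this
    rw [hd]
    simpa [show ((2 : Algebra.adjoin ℤ ({α} : Set ℂ)) : ℂ) = 2 from
      map_ofNat (Algebra.adjoin ℤ ({α} : Set ℂ)).val 2] using this
  have hminpoly : minpoly ℤ α = X ^ (2 ^ (n - 1)) + 1 := by
    rw [← Polynomial.cyclotomic_eq_minpoly hprim (by positivity),
      show (2:ℕ)^n = 2 ^ ((n-1)+1) by congr 1; omega,
      cyclotomic_prime_pow_eq_geom_sum Nat.prime_two]
    simp [Finset.sum_range_succ]
    ring
  have hint : IsIntegral ℤ α := hprim.isIntegral (by positivity)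
  refine ⟨?_, ?_, ?_⟩
  · -- part 1
    rintro k hk ⟨x, hxA, hx⟩
    obtain ⟨y, hyA, hy⟩ := key k
    have hwA : x - y ∈ Algebra.adjoin ℤ ({α} : Set ℂ) := sub_mem hxA hyA
    rw [Algebra.adjoin_singleton_eq_range_aeval] at hwA
    obtain ⟨p, hp⟩ := hwA
    have hp' : aeval α p = x - y := hp
    have hw : α ^ (2 ^ k) + (α⁻¹) ^ (2 ^ k) = 2 * (aeval α p) := by
      rw [hp']; linear_combination hx - hy
    have h1 : α ^ (2 ^ k) * (α⁻¹) ^ (2 ^ k) = 1 := by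
      rw [← mul_pow, mul_inv_cancel₀ hα0, one_pow]
    have heq : aeval α ((X : ℤ[X]) ^ (2 ^ (k + 1)) + 1 - C 2 * p * X ^ (2 ^ k)) = 0 := by
      have e : α ^ (2 ^ (k + 1)) = α ^ (2 ^ k) * α ^ (2 ^ k) := by
        rw [← pow_add]; congr 1; omega
      simp only [map_add, map_sub, map_mul, map_pow, aeval_X, aeval_C, map_one, map_ofNat]
      rw [e]
      linear_combination α ^ (2 ^ k) * hw - h1
    have hdvd : minpoly ℤ α ∣ (X : ℤ[X]) ^ (2 ^ (k + 1)) + 1 - C 2 * p * X ^ (2 ^ k) :=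
      minpoly.isIntegrallyClosed_dvd hint heq
    rw [hminpoly] at hdvd
    have hdvd2 : ((X : (ZMod 2)[X]) ^ (2 ^ (n - 1)) + 1) ∣ (X ^ (2 ^ (k + 1)) + 1) := by
      have := Polynomial.map_dvd (Int.castRingHom (ZMod 2)) hdvd
      have h2p : (2 : (ZMod 2)[X]) = 0 := by
        rw [← map_ofNat (Polynomial.C : ZMod 2 →+* (ZMod 2)[X]) 2,
          show (2 : ZMod 2) = 0 from rfl, map_zero]
      simpa [Polynomial.map_add, Polynomial.map_sub, Polynomial.map_mul,
        Polynomial.map_pow, map_C, h2p, show ((2 : ℤ) : ZMod 2) = 0 from rfl] using this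
    have hpos : 0 < 2 ^ (k + 1) := by positivity
    have hne : ((X : (ZMod 2)[X]) ^ (2 ^ (k + 1)) + 1) ≠ 0 := by
      have := Polynomial.X_pow_add_C_ne_zero hpos (1 : ZMod 2)
      simpa using this
    have hdeg := Polynomial.natDegree_le_of_dvd hdvd2 hne
    have hd1 : ((X : (ZMod 2)[X]) ^ (2 ^ (n - 1)) + 1).natDegree = 2 ^ (n - 1) := by
      have := Polynomial.natDegree_X_pow_add_C (R := ZMod 2) (n := 2 ^ (n - 1)) (r := 1)
      simpa using this
    have hd2 : ((X : (ZMod 2)[X]) ^ (2 ^ (k + 1)) + 1).natDegree = 2 ^ (k + 1) := by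
      have := Polynomial.natDegree_X_pow_add_C (R := ZMod 2) (n := 2 ^ (k + 1)) (r := 1)
      simpa using this
    rw [hd1, hd2] at hdeg
    have hlt : (2 : ℕ) ^ (k + 1) < 2 ^ (n - 1) :=
      Nat.pow_lt_pow_right (by norm_num) (by omega)
    omega
  · -- part 2
    obtain ⟨z, hzA, hz⟩ := key (n - 3)
    have hsqrt : α ^ (2 ^ (n - 3)) + (α⁻¹) ^ (2 ^ (n - 3)) = (Real.sqrt 2 : ℂ) := by
      have h2c : (2 : ℂ) ^ n ≠ 0 := pow_ne_zero _ two_ne_zero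
      have hangle : ((2 : ℂ) ^ (n - 3) * (2 * Real.pi * Complex.I / 2 ^ n))
          = (Real.pi / 4 : ℝ) * Complex.I := by
        have hpow : (2 : ℂ) ^ n = (2 : ℂ) ^ (n - 3) * 8 := by
          rw [show n = (n - 3) + 3 by omega]
          rw [pow_add]; norm_num
        have h8 : (2 : ℂ) ^ (n - 3) ≠ 0 := pow_ne_zero _ two_ne_zero
        rw [hpow]
        push_cast
        field_simp
        ring
      have hαj : α ^ (2 ^ (n - 3)) = Complex.exp ((Real.pi / 4 : ℝ) * Complex.I) := by
        rw [hα, ← Complex.exp_nat_mul, ← hangle]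
        congr 1
        push_cast
        ring
      have hαjinv : (α⁻¹) ^ (2 ^ (n - 3))
          = Complex.exp (-((Real.pi / 4 : ℝ) * Complex.I)) := by
        rw [inv_pow, hαj, ← Complex.exp_neg]
      rw [hαj, hαjinv]
      have h2cos := Complex.two_cos (x := ((Real.pi / 4 : ℝ) : ℂ))
      rw [neg_mul] at h2cos
      rw [← h2cos, ← Complex.ofReal_cos, Real.cos_pi_div_four]
      push_cast
      ring
    exact ⟨z, hzA, by linear_combination hz + hsqrt⟩
  · -- part 3
    intro h
    have hs : ((Real.sqrt 2 : ℂ)) * (Real.sqrt 2 : ℂ) = 2 := by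
      rw [← Complex.ofReal_mul, Real.mul_self_sqrt (by norm_num)]
      norm_num
    have h2 : IsIntegral ℤ ((1 : ℂ) / 2) := by
      have hmul := h.mul h
      have : ((Real.sqrt 2 : ℂ) / 2) * ((Real.sqrt 2 : ℂ) / 2) = 1 / 2 := by
        rw [div_mul_div_comm, hs]; norm_num
      rwa [this] at hmul
    rw [show ((1 : ℂ) / 2) = algebraMap ℚ ℂ ((1 : ℚ) / 2) by push_cast; norm_num] at h2
    have h3 : IsIntegral ℤ ((1 : ℚ) / 2) :=
      (isIntegral_algebraMap_iff (algebraMap ℚ ℂ).injective).mp h2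
    obtain ⟨y, hy⟩ := IsIntegrallyClosed.isIntegral_iff.mp h3
    have hy' : (y : ℚ) = 1 / 2 := hy
    have hy2 : (y : ℚ) * 2 = 1 := by rw [hy']; norm_num
    have : y * 2 = 1 := by exact_mod_cast hy2
    omega
end
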